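/- Let 1/2 < α < 1, let t be real, s = α + it, and let 1 < w < v be reals such that |θ(u) − u| ≤ 2·√u for all u ∈ [w,v] (this holds in particular when 1427 ≤ w < v ≤ 10^19). Then |F_s(v,w)| ≤ 2·( v^{1/2−α} + w^{1/2−α} ) + 2·|s|·( w^{1/2−α} − v^{1/2−α} )/( α − 1/2 ). -/

import Mathlib

/-- Chebyshev's function `θ(x) = ∑_{p ≤ x, p prime} log p`. -/
noncomputable def theta (x : ℝ) : ℝ :=
  ∑ p ∈ (Finset.range (⌊x⌋₊ + 1)).filter Nat.Prime, Real.log p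

/-- `F_s(v,w) = ∑_{w < p ≤ v, p prime} (log p)/p^s − (v^{1−s} − w^{1−s})/(1−s)`. -/
noncomputable def Fs (s : ℂ) (v w : ℝ) : ℂ :=
  (∑ p ∈ (Finset.range (⌊v⌋₊ + 1)).filter (fun p : ℕ => Nat.Prime p ∧ w < (p : ℝ)),
      (Real.log p : ℂ) / (p : ℂ) ^ s) -
    ((v : ℂ) ^ (1 - s) - (w : ℂ) ^ (1 - s)) / (1 - s)

open MeasureTheory

lemma theta_nonneg (x : ℝ) : 0 ≤ theta x := by
  refine Finset.sum_nonneg fun p hp => ?_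
  simp only [Finset.mem_filter] at hp
  exact Real.log_nonneg (by exact_mod_cast hp.2.one_lt.le)

lemma theta_mono : Monotone theta := by
  intro x y hxy
  refine Finset.sum_le_sum_of_subset_of_nonneg ?_ ?_
  · refine Finset.filter_subset_filter _ (Finset.range_subset_range.mpr ?_)
    exact Nat.add_le_add_right (Nat.floor_le_floor hxy) 1
  · intro p hp _
    simp only [Finset.mem_filter] at hp
    exact Real.log_nonneg (by exact_mod_cast hp.2.one_lt.le)

lemma theta_sum_eq (x : ℝ) :
    (∑ k ∈ Finset.Icc 0 ⌊x⌋₊, (if Nat.Prime k then ((Real.log k : ℝ) : ℂ) else 0))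
      = ((theta x : ℝ) : ℂ) := by
  have h : Finset.Icc 0 ⌊x⌋₊ = Finset.range (⌊x⌋₊ + 1) := by
    ext k; simp [Nat.lt_succ_iff]
  rw [h, theta, Finset.sum_filter, Complex.ofReal_sum]
  simp [apply_ite (fun r : ℝ => (r : ℂ))]

lemma hasDerivAt_fcpow (s : ℂ) (hs : s ≠ 0) {x : ℝ} (hx : x ≠ 0) :
    HasDerivAt (fun y : ℝ => (y : ℂ) ^ (-s)) (-s * (x : ℂ) ^ (-s - 1)) x := by
  have hns : -s ≠ 0 := neg_ne_zero.mpr hs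
  have h := hasDerivAt_ofReal_cpow_const' hx (r := -s - 1)
    (by intro h; apply hs; linear_combination -h)
  have h2 : (-s - 1) + 1 = -s := by ring
  rw [h2] at h
  have h3 := h.const_mul (-s)
  have h4 : (fun y : ℝ => -s * ((y : ℂ) ^ (-s) / (-s))) = fun y : ℝ => (y : ℂ) ^ (-s) := by
    funext y
    rw [mul_comm, div_mul_cancel₀ _ hns]
  rw [h4] at h3
  convert h3 using 1


theorem stmt_9 (α t w v : ℝ) (hα1 : 1 / 2 < α) (hα2 : α < 1)
    (hw : 1 < w) (hwv : w < v)
    (hθ : ∀ u ∈ Set.Icc w v, |theta u - u| ≤ 2 * Real.sqrt u) :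
    ‖Fs ((α : ℂ) + (t : ℂ) * Complex.I) v w‖
      ≤ 2 * (v ^ (1 / 2 - α) + w ^ (1 / 2 - α)) +
        2 * ‖(α : ℂ) + (t : ℂ) * Complex.I‖ *
          (w ^ (1 / 2 - α) - v ^ (1 / 2 - α)) / (α - 1 / 2) := by
  set s : ℂ := (α : ℂ) + (t : ℂ) * Complex.I with hsdef
  have hw0 : (0:ℝ) < w := by linarith
  have hv0 : (0:ℝ) < v := by linarith
  have hsre : s.re = α := by simp [hsdef]
  have hs0 : s ≠ 0 := by
    intro h; rw [h] at hsre; simp at hsre; linarith [hsre]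
  have hs1 : (1:ℂ) - s ≠ 0 := by
    intro h
    have h2 : (1 - s).re = 0 := by rw [h]; simp
    simp only [Complex.sub_re, Complex.one_re, hsre] at h2
    linarith
  set f : ℝ → ℂ := fun y => (y : ℂ) ^ (-s) with hfdef
  set c : ℕ → ℂ := fun k => if Nat.Prime k then ((Real.log k : ℝ) : ℂ) else 0 with hcdef
  have hder : ∀ x : ℝ, x ≠ 0 → HasDerivAt f (-s * (x : ℂ) ^ (-s - 1)) x :=
    fun x hx => hasDerivAt_fcpow s hs0 hx
  have hderiv_eq : ∀ x : ℝ, x ≠ 0 → deriv f x = -s * (x : ℂ) ^ (-s - 1) :=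
    fun x hx => (hder x hx).deriv
  have hdiff : ∀ x ∈ Set.Icc w v, DifferentiableAt ℝ f x :=
    fun x hx => (hder x (lt_of_lt_of_le hw0 hx.1).ne').differentiableAt
  have hcont : ContinuousOn (fun x : ℝ => -s * (x : ℂ) ^ (-s - 1)) (Set.Icc w v) := by
    refine continuousOn_const.mul ?_
    refine ContinuousOn.cpow Complex.continuous_ofReal.continuousOn continuousOn_const ?_
    intro x hx
    exact Complex.ofReal_mem_slitPlane.mpr (lt_of_lt_of_le hw0 hx.1)
  have hint : IntegrableOn (deriv f) (Set.Icc w v) :=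
    (hcont.integrableOn_Icc).congr_fun
      (fun x hx => (hderiv_eq x (lt_of_lt_of_le hw0 hx.1).ne').symm) measurableSet_Icc
  have hcsum : ∀ x : ℝ, (∑ k ∈ Finset.Icc 0 ⌊x⌋₊, c k) = ((theta x : ℝ) : ℂ) := by
    intro x; rw [hcdef]; exact theta_sum_eq x
  have habel := sum_mul_eq_sub_sub_integral_mul c hw0.le hwv.le hdiff hint
  simp only [hcsum] at habel
  -- identify the prime sum
  have hfinset : (Finset.range (⌊v⌋₊ + 1)).filter (fun p : ℕ => Nat.Prime p ∧ w < (p : ℝ)) =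
      (Finset.Ioc ⌊w⌋₊ ⌊v⌋₊).filter Nat.Prime := by
    ext p
    simp only [Finset.mem_filter, Finset.mem_range, Finset.mem_Ioc, Nat.lt_succ_iff,
      Nat.floor_lt hw0.le, Nat.le_floor_iff hv0.le]
    constructor
    · rintro ⟨h1, h2, h3⟩; exact ⟨⟨h3, h1⟩, h2⟩
    · rintro ⟨⟨h1, h2⟩, h3⟩; exact ⟨h2, h3, h1⟩
  have hsum_eq : (∑ p ∈ (Finset.range (⌊v⌋₊ + 1)).filter
        (fun p : ℕ => Nat.Prime p ∧ w < (p : ℝ)), (Real.log p : ℂ) / (p : ℂ) ^ s)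
      = ∑ k ∈ Finset.Ioc ⌊w⌋₊ ⌊v⌋₊, f k * c k := by
    rw [hfinset, Finset.sum_filter]
    refine Finset.sum_congr rfl fun k _ => ?_
    simp only [hcdef, hfdef]
    by_cases hp : Nat.Prime k
    · simp only [hp, if_true]
      rw [Complex.cpow_neg, div_eq_mul_inv, mul_comm]
      norm_cast
    · simp [hp]
  -- main term
  have hI2 : (∫ x in Set.Ioc w v, deriv f x * (x : ℂ)) =
      -s * (((v:ℂ) ^ (1 - s) - (w:ℂ) ^ (1 - s)) / (1 - s)) := by
    rw [← intervalIntegral.integral_of_le hwv.le]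
    have heq : Set.EqOn (fun x : ℝ => deriv f x * (x : ℂ))
        (fun x : ℝ => -s * (x:ℂ) ^ (-s)) (Set.uIcc w v) := by
      intro x hx
      rw [Set.uIcc_of_le hwv.le] at hx
      have hx0 : (0:ℝ) < x := lt_of_lt_of_le hw0 hx.1
      have hx0' : (x:ℂ) ≠ 0 := by exact_mod_cast hx0.ne'
      simp only
      rw [hderiv_eq x hx0.ne', mul_assoc]
      congr 1
      calc (x:ℂ) ^ (-s - 1) * (x:ℂ) = (x:ℂ) ^ (-s - 1) * (x:ℂ) ^ (1:ℂ) := by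
            rw [Complex.cpow_one]
        _ = (x:ℂ) ^ (-s - 1 + 1) := (Complex.cpow_add _ _ hx0').symm
        _ = (x:ℂ) ^ (-s) := by norm_num
    rw [intervalIntegral.integral_congr heq, intervalIntegral.integral_const_mul,
      integral_cpow (Or.inl (by simp only [Complex.neg_re, hsre]; linarith))]
    have he : -s + 1 = 1 - s := by ring
    rw [he]
  have hfv : f v * (v:ℂ) = (v:ℂ) ^ (1 - s) := by
    simp only [hfdef]
    rw [show (1:ℂ) - s = -s + 1 by ring,
      Complex.cpow_add _ _ (by exact_mod_cast hv0.ne' : (v:ℂ) ≠ 0), Complex.cpow_one]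
  have hfw : f w * (w:ℂ) = (w:ℂ) ^ (1 - s) := by
    simp only [hfdef]
    rw [show (1:ℂ) - s = -s + 1 by ring,
      Complex.cpow_add _ _ (by exact_mod_cast hw0.ne' : (w:ℂ) ≠ 0), Complex.cpow_one]
  have hM : ((v:ℂ) ^ (1 - s) - (w:ℂ) ^ (1 - s)) / (1 - s) =
      f v * (v:ℂ) - f w * (w:ℂ) - ∫ x in Set.Ioc w v, deriv f x * (x : ℂ) := by
    rw [hI2, hfv, hfw]
    field_simp
    ring
  -- integrability on Ioc
  have hint2 : IntegrableOn (fun x : ℝ => deriv f x * (x : ℂ)) (Set.Ioc w v) := by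
    refine IntegrableOn.mono_set ?_ Set.Ioc_subset_Icc_self
    have hcont2 : ContinuousOn (fun x : ℝ => (-s * (x:ℂ) ^ (-s - 1)) * (x:ℂ)) (Set.Icc w v) :=
      hcont.mul Complex.continuous_ofReal.continuousOn
    exact (hcont2.integrableOn_Icc).congr_fun
      (fun x hx => by rw [hderiv_eq x (lt_of_lt_of_le hw0 hx.1).ne']) measurableSet_Icc
  have hint1 : IntegrableOn (fun x : ℝ => deriv f x * ((theta x : ℝ) : ℂ)) (Set.Ioc w v) := by
    refine IntegrableOn.mono_set ?_ Set.Ioc_subset_Icc_self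
    refine Integrable.mono' ((hint.norm).mul_const (theta v)) ?_ ?_
    · exact ((measurable_deriv f).mul
        (Complex.measurable_ofReal.comp theta_mono.measurable)).aestronglyMeasurable.restrict
    · refine (ae_restrict_iff' measurableSet_Icc).mpr (Filter.Eventually.of_forall fun x hx => ?_)
      rw [norm_mul]
      refine mul_le_mul_of_nonneg_left ?_ (norm_nonneg _)
      rw [Complex.norm_real, Real.norm_eq_abs, abs_of_nonneg (theta_nonneg x)]
      exact theta_mono hx.2
  -- rewrite Fs
  have hFs : Fs s v w = f v * (((theta v : ℝ):ℂ) - (v:ℂ)) - f w * (((theta w : ℝ):ℂ) - (w:ℂ))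
      - ∫ x in Set.Ioc w v, deriv f x * (((theta x : ℝ):ℂ) - (x:ℂ)) := by
    have hsub : (∫ x in Set.Ioc w v, deriv f x * (((theta x : ℝ):ℂ) - (x:ℂ)))
        = (∫ x in Set.Ioc w v, deriv f x * ((theta x : ℝ):ℂ))
          - ∫ x in Set.Ioc w v, deriv f x * (x:ℂ) := by
      rw [← integral_sub hint1 hint2]
      simp only [mul_sub]
    rw [Fs, hsum_eq, habel, hM, hsub]
    ring
  rw [hFs]
  -- bounds on boundary terms
  have habsf : ∀ x : ℝ, 0 < x → ‖f x‖ = x ^ (-α) := by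
    intro x hx
    simp only [hfdef]
    rw [Complex.norm_cpow_eq_rpow_re_of_pos hx]
    simp [hsre]
  have hbdry : ∀ x : ℝ, x ∈ Set.Icc w v →
      ‖f x * (((theta x : ℝ):ℂ) - (x:ℂ))‖ ≤ 2 * x ^ ((1:ℝ)/2 - α) := by
    intro x hx
    have hx0 : (0:ℝ) < x := lt_of_lt_of_le hw0 hx.1
    rw [norm_mul, habsf x hx0]
    have h1 : ‖((theta x : ℝ):ℂ) - (x:ℂ)‖ = |theta x - x| := by
      rw [← Complex.ofReal_sub, Complex.norm_real, Real.norm_eq_abs]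
    rw [h1]
    calc x ^ (-α) * |theta x - x| ≤ x ^ (-α) * (2 * Real.sqrt x) := by
          refine mul_le_mul_of_nonneg_left (hθ x hx) (Real.rpow_nonneg hx0.le _)
      _ = 2 * x ^ ((1:ℝ)/2 - α) := by
          rw [Real.sqrt_eq_rpow]
          rw [show x ^ (-α) * (2 * x ^ ((1:ℝ)/2)) = 2 * (x ^ (-α) * x ^ ((1:ℝ)/2)) by ring,
            ← Real.rpow_add hx0, show -α + (1:ℝ)/2 = (1:ℝ)/2 - α by ring]
  -- bound on integral term
  set g : ℝ → ℝ := fun x => ‖s‖ * (x ^ (-α - 1) * (2 * Real.sqrt x)) with hgdef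
  have hgcont : ContinuousOn g (Set.Icc w v) := by
    refine continuousOn_const.mul (ContinuousOn.mul ?_ ?_)
    · exact continuousOn_id.rpow_const fun x hx => Or.inl (lt_of_lt_of_le hw0 hx.1).ne'
    · exact continuousOn_const.mul Real.continuous_sqrt.continuousOn
  have hgint : IntegrableOn g (Set.Ioc w v) :=
    (hgcont.integrableOn_Icc).mono_set Set.Ioc_subset_Icc_self
  have hZ : ‖∫ x in Set.Ioc w v, deriv f x * (((theta x : ℝ):ℂ) - (x:ℂ))‖
      ≤ ∫ x in Set.Ioc w v, g x := by
    refine norm_integral_le_of_norm_le hgint ?_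
    refine (ae_restrict_iff' measurableSet_Ioc).mpr (Filter.Eventually.of_forall fun x hx => ?_)
    have hx0 : (0:ℝ) < x := lt_trans hw0 hx.1
    rw [norm_mul, hderiv_eq x hx0.ne', norm_mul, norm_neg]
    have h2 : ‖(x:ℂ) ^ (-s - 1)‖ = x ^ (-α - 1) := by
      rw [Complex.norm_cpow_eq_rpow_re_of_pos hx0]
      congr 1
      simp [hsre]
    have h3 : ‖((theta x : ℝ):ℂ) - (x:ℂ)‖ = |theta x - x| := by
      rw [← Complex.ofReal_sub, Complex.norm_real, Real.norm_eq_abs]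
    rw [h2, h3, hgdef, mul_assoc]
    refine mul_le_mul_of_nonneg_left ?_ (norm_nonneg s)
    refine mul_le_mul_of_nonneg_left ?_ (Real.rpow_nonneg hx0.le _)
    exact hθ x ⟨hx.1.le, hx.2⟩
  have hgval : (∫ x in Set.Ioc w v, g x) =
      ‖s‖ * (2 * ((v ^ ((1:ℝ)/2 - α) - w ^ ((1:ℝ)/2 - α)) / ((1:ℝ)/2 - α))) := by
    rw [← intervalIntegral.integral_of_le hwv.le, hgdef, intervalIntegral.integral_const_mul]
    congr 1
    have heq : Set.EqOn (fun x : ℝ => x ^ (-α - 1) * (2 * Real.sqrt x))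
        (fun x : ℝ => 2 * x ^ (-α - 1 + (1:ℝ)/2)) (Set.uIcc w v) := by
      intro x hx
      rw [Set.uIcc_of_le hwv.le] at hx
      have hx0 : (0:ℝ) < x := lt_of_lt_of_le hw0 hx.1
      simp only
      rw [Real.sqrt_eq_rpow,
        show x ^ (-α - 1) * (2 * x ^ ((1:ℝ)/2)) = 2 * (x ^ (-α - 1) * x ^ ((1:ℝ)/2)) by ring,
        ← Real.rpow_add hx0]
    rw [intervalIntegral.integral_congr heq, intervalIntegral.integral_const_mul,
      integral_rpow (Or.inr ⟨by intro h; linarith,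
        by rw [Set.uIcc_of_le hwv.le]; intro h; linarith [h.1]⟩)]
    rw [show -α - 1 + (1:ℝ)/2 + 1 = (1:ℝ)/2 - α by ring]
  -- assemble
  calc ‖f v * (((theta v : ℝ):ℂ) - (v:ℂ)) - f w * (((theta w : ℝ):ℂ) - (w:ℂ))
        - ∫ x in Set.Ioc w v, deriv f x * (((theta x : ℝ):ℂ) - (x:ℂ))‖
      ≤ ‖f v * (((theta v : ℝ):ℂ) - (v:ℂ))‖
        + ‖f w * (((theta w : ℝ):ℂ) - (w:ℂ))‖
        + ‖∫ x in Set.Ioc w v, deriv f x * (((theta x : ℝ):ℂ) - (x:ℂ))‖ := by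
        refine le_trans (norm_sub_le _ _) ?_
        gcongr
        exact norm_sub_le _ _
    _ ≤ 2 * v ^ ((1:ℝ)/2 - α) + 2 * w ^ ((1:ℝ)/2 - α)
        + ‖s‖ * (2 * ((v ^ ((1:ℝ)/2 - α) - w ^ ((1:ℝ)/2 - α)) / ((1:ℝ)/2 - α))) := by
        gcongr ?_ + ?_ + ?_
        · exact hbdry v ⟨hwv.le, le_refl v⟩
        · exact hbdry w ⟨le_refl w, hwv.le⟩
        · exact hZ.trans (le_of_eq hgval)
    _ = 2 * (v ^ (1 / 2 - α) + w ^ (1 / 2 - α)) +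
        2 * ‖s‖ * (w ^ (1 / 2 - α) - v ^ (1 / 2 - α)) / (α - 1 / 2) := by
        have hne : α - 1/2 ≠ 0 := by linarith
        have hne2 : (1:ℝ)/2 - α ≠ 0 := by linarith
        have key : (v ^ ((1:ℝ)/2 - α) - w ^ ((1:ℝ)/2 - α)) / ((1:ℝ)/2 - α)
            = (w ^ ((1:ℝ)/2 - α) - v ^ ((1:ℝ)/2 - α)) / (α - 1/2) := by
          rw [div_eq_div_iff hne2 hne]; ring
        rw [key]; ring
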